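/- Let Φ : ℝ → [0,∞) be a convex function, let l ≤ n be a positive integer, and let φ_1,…,φ_n be an 𝔐_l-multiplicative system of random variables with ‖φ_k‖_∞ ≤ 1 for all k. Then there exist 𝔐_l-independent Rademacher random variables r_1,…,r_n on some probability space such that for every choice of real coefficients a_1,…,a_n one has E[Φ(∑_{k=1}^n a_k φ_k)] ≤ E[Φ(∑_{k=1}^n a_k r_k)]. -/

import Mathlib

open MeasureTheory ProbabilityTheory

/-- `ξ` is `𝔐_l`-independent: for every nonempty index set `S` of cardinality at most `l`,
the family `{ξ_j : j ∈ S}` is mutually independent. -/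
def MlIndepFun {Ω : Type*} [MeasurableSpace Ω] (P : Measure Ω) {n : ℕ} (l : ℕ)
    (ξ : Fin n → Ω → ℝ) : Prop :=
  ∀ S : Finset (Fin n), S.Nonempty → S.card ≤ l →
    iIndepFun (fun j : S => ξ j) P

/-- `r` is a Rademacher random variable: it takes the values `+1` and `-1`,
each with probability `1/2`. -/
def IsRademacher {Ω : Type*} [MeasurableSpace Ω] (Q : Measure Ω) (r : Ω → ℝ) : Prop :=
  (∀ ω, r ω = 1 ∨ r ω = -1) ∧ Q {ω | r ω = 1} = 1/2 ∧ Q {ω | r ω = -1} = 1/2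

-- Auxiliary lemmas ------------------------------------------------

/-- sign of a boolean -/
def bsgn (b : Bool) : ℝ := if b then 1 else -1

lemma bsgn_true : bsgn true = 1 := rfl
lemma bsgn_false : bsgn false = -1 := rfl

open Classical in
/-- indicator -/
noncomputable def rind (A : Set ℝ) (x : ℝ) : ℝ := if x ∈ A then 1 else 0

/-- Master lemma: sum over boolean vectors of a product equals product of sums. -/
lemma boolMaster {n : ℕ} (g : Fin n → Bool → ℝ) :
    ∑ s : Fin n → Bool, ∏ k, g k (s k) = ∏ k, (g k true + g k false) := by
  classical
  rw [← Fintype.prod_sum g]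
  simp [Fintype.sum_bool]

/-- weight function -/
noncomputable def wgt {Ω : Type*} {n : ℕ} (φ : Fin n → Ω → ℝ) (ω : Ω) (s : Fin n → Bool) : ℝ :=
  ∏ k, (1 + bsgn (s k) * φ k ω) / 2

lemma wgt_sum_mul {Ω : Type*} {n : ℕ} (φ : Fin n → Ω → ℝ) (ω : Ω) (χ : Fin n → Bool → ℝ) :
    ∑ s : Fin n → Bool, wgt φ ω s * ∏ k, χ k (s k)
      = ∏ k, ((1 + φ k ω) / 2 * χ k true + (1 - φ k ω) / 2 * χ k false) := by
  classical
  calc ∑ s : Fin n → Bool, wgt φ ω s * ∏ k, χ k (s k)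
      = ∑ s : Fin n → Bool, ∏ k, ((1 + bsgn (s k) * φ k ω) / 2 * χ k (s k)) := by
        simp only [wgt, Finset.prod_mul_distrib]
    _ = ∏ k, ((1 + bsgn true * φ k ω) / 2 * χ k true + (1 + bsgn false * φ k ω) / 2 * χ k false) :=
        boolMaster (fun k b => (1 + bsgn b * φ k ω) / 2 * χ k b)
    _ = _ := Finset.prod_congr rfl fun k _ => by rw [bsgn_true, bsgn_false]; ring

lemma wgt_sum_eq_one {Ω : Type*} {n : ℕ} (φ : Fin n → Ω → ℝ) (ω : Ω) :
    ∑ s : Fin n → Bool, wgt φ ω s = 1 := by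
  have h := wgt_sum_mul φ ω (fun _ _ => 1)
  simp only [mul_one, Finset.prod_const_one] at h
  rw [h, Finset.prod_eq_one]
  intro k _; ring

lemma wgt_sum_sgn {Ω : Type*} {n : ℕ} (φ : Fin n → Ω → ℝ) (ω : Ω) (k₀ : Fin n) :
    ∑ s : Fin n → Bool, wgt φ ω s * bsgn (s k₀) = φ k₀ ω := by
  classical
  have h := wgt_sum_mul φ ω (fun k b => if k = k₀ then bsgn b else 1)
  have hl : ∀ s : Fin n → Bool,
      (∏ k, (if k = k₀ then bsgn (s k) else 1)) = bsgn (s k₀) := by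
    intro s
    simp [Finset.prod_ite_eq']
  calc ∑ s : Fin n → Bool, wgt φ ω s * bsgn (s k₀)
      = ∑ s : Fin n → Bool, wgt φ ω s * ∏ k, (if k = k₀ then bsgn (s k) else 1) := by
        refine Finset.sum_congr rfl fun s _ => by rw [hl]
    _ = ∏ k, ((1 + φ k ω) / 2 * (if k = k₀ then bsgn true else 1)
          + (1 - φ k ω) / 2 * (if k = k₀ then bsgn false else 1)) := h
    _ = φ k₀ ω := by
        rw [Finset.prod_eq_single_of_mem k₀ (Finset.mem_univ _)]
        · rw [if_pos rfl, if_pos rfl, bsgn_true, bsgn_false]; ring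
        · intro k _ hk
          rw [if_neg hk, if_neg hk]; ring

lemma wgt_nonneg {Ω : Type*} {n : ℕ} {φ : Fin n → Ω → ℝ} {ω : Ω}
    (h : ∀ k, |φ k ω| ≤ 1) (s : Fin n → Bool) : 0 ≤ wgt φ ω s := by
  refine Finset.prod_nonneg fun k _ => ?_
  have h1 := abs_le.1 (h k)
  cases hsk : s k <;> simp [bsgn] <;> nlinarith [h1.1, h1.2]

lemma wgt_le_one {Ω : Type*} {n : ℕ} {φ : Fin n → Ω → ℝ} {ω : Ω}
    (h : ∀ k, |φ k ω| ≤ 1) (s : Fin n → Bool) : wgt φ ω s ≤ 1 := by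
  refine Finset.prod_le_one (fun k _ => ?_) (fun k _ => ?_)
  · have h1 := abs_le.1 (h k)
    cases hsk : s k <;> simp [bsgn] <;> nlinarith [h1.1, h1.2]
  · have h1 := abs_le.1 (h k)
    cases hsk : s k <;> simp [bsgn] <;> nlinarith [h1.1, h1.2]

/-- marginal sums of the weight over a constrained set -/
lemma wgt_sum_filter {Ω : Type*} {n : ℕ} (φ : Fin n → Ω → ℝ) (ω : Ω)
    (T : Finset (Fin n)) (A : Fin n → Set ℝ)
    [DecidablePred fun s : Fin n → Bool => ∀ k ∈ T, bsgn (s k) ∈ A k] :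
    ∑ s ∈ Finset.univ.filter (fun s : Fin n → Bool => ∀ k ∈ T, bsgn (s k) ∈ A k), wgt φ ω s
      = ∏ k ∈ T, ((rind (A k) 1 + rind (A k) (-1)) / 2
          + (rind (A k) 1 - rind (A k) (-1)) / 2 * φ k ω) := by
  classical
  have hfil : ∑ s ∈ Finset.univ.filter (fun s : Fin n → Bool => ∀ k ∈ T, bsgn (s k) ∈ A k),
      wgt φ ω s = ∑ s : Fin n → Bool,
        wgt φ ω s * ∏ k, (if k ∈ T then rind (A k) (bsgn (s k)) else 1) := by
    rw [Finset.sum_filter]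
    refine Finset.sum_congr rfl fun s _ => ?_
    have hprod : (∏ k, (if k ∈ T then rind (A k) (bsgn (s k)) else 1))
        = if (∀ k ∈ T, bsgn (s k) ∈ A k) then (1:ℝ) else 0 := by
      have : ∀ k : Fin n, (if k ∈ T then rind (A k) (bsgn (s k)) else 1)
          = if (k ∈ T → bsgn (s k) ∈ A k) then (1:ℝ) else 0 := by
        intro k
        by_cases hk : k ∈ T <;> by_cases hm : bsgn (s k) ∈ A k <;>
          simp [hk, hm, rind]
      rw [Finset.prod_congr rfl fun k _ => this k, Finset.prod_boole]
      simp
    rw [hprod]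
    by_cases hs : ∀ k ∈ T, bsgn (s k) ∈ A k <;> simp [hs]
  rw [hfil, wgt_sum_mul φ ω (fun k b => if k ∈ T then rind (A k) (bsgn b) else 1)]
  rw [← Finset.prod_mul_prod_compl T]
  have h2 : ∏ k ∈ Tᶜ, ((1 + φ k ω) / 2 * (if k ∈ T then rind (A k) (bsgn true) else 1)
      + (1 - φ k ω) / 2 * (if k ∈ T then rind (A k) (bsgn false) else 1)) = 1 := by
    refine Finset.prod_eq_one fun k hk => ?_
    have hk' : k ∉ T := Finset.mem_compl.1 hk
    rw [if_neg hk', if_neg hk']; ring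
  rw [h2, mul_one]
  refine Finset.prod_congr rfl fun k hk => ?_
  rw [if_pos hk, if_pos hk, bsgn_true, bsgn_false]; ring

lemma prod_integrable {Ω : Type*} [MeasurableSpace Ω] (P : Measure Ω) [IsProbabilityMeasure P]
    {n : ℕ} (φ : Fin n → Ω → ℝ) (hφm : ∀ k, Measurable (φ k))
    (hφb : ∀ k, ∀ᵐ ω ∂P, |φ k ω| ≤ 1) (U : Finset (Fin n)) :
    Integrable (fun ω => ∏ k ∈ U, φ k ω) P := by
  have hm : Measurable fun ω => ∏ k ∈ U, φ k ω := Finset.measurable_prod _ fun k _ => hφm k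
  refine (integrable_const (1:ℝ)).mono' hm.aestronglyMeasurable ?_
  have hb : ∀ᵐ ω ∂P, ∀ k, |φ k ω| ≤ 1 := (ae_all_iff).2 hφb
  filter_upwards [hb] with ω hω
  rw [Real.norm_eq_abs, Finset.abs_prod]
  exact Finset.prod_le_one (fun k _ => abs_nonneg _) (fun k _ => hω k)

lemma key_integral {Ω : Type*} [MeasurableSpace Ω] (P : Measure Ω) [IsProbabilityMeasure P]
    {n l : ℕ} (φ : Fin n → Ω → ℝ) (hφm : ∀ k, Measurable (φ k))
    (hφb : ∀ k, ∀ᵐ ω ∂P, |φ k ω| ≤ 1)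
    (hmult : ∀ S : Finset (Fin n), S.Nonempty → S.card ≤ l →
      ∫ ω, ∏ j ∈ S, φ j ω ∂P = 0)
    (T : Finset (Fin n)) (hT : T.card ≤ l) (α β : Fin n → ℝ) :
    ∫ ω, ∏ k ∈ T, (α k + β k * φ k ω) ∂P = ∏ k ∈ T, α k := by
  classical
  have hpt : ∀ ω, ∏ k ∈ T, (α k + β k * φ k ω)
      = ∑ U ∈ T.powerset, ((∏ k ∈ U, β k) * (∏ k ∈ T \ U, α k)) * ∏ k ∈ U, φ k ω := by
    intro ω
    rw [show (∏ k ∈ T, (α k + β k * φ k ω)) = ∏ k ∈ T, (β k * φ k ω + α k) from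
      Finset.prod_congr rfl fun k _ => by ring]
    rw [Finset.prod_add]
    refine Finset.sum_congr rfl fun U _ => ?_
    rw [Finset.prod_mul_distrib]; ring
  calc ∫ ω, ∏ k ∈ T, (α k + β k * φ k ω) ∂P
      = ∫ ω, ∑ U ∈ T.powerset, ((∏ k ∈ U, β k) * (∏ k ∈ T \ U, α k)) * ∏ k ∈ U, φ k ω ∂P := by
        exact integral_congr_ae (Filter.Eventually.of_forall hpt)
    _ = ∑ U ∈ T.powerset, ((∏ k ∈ U, β k) * (∏ k ∈ T \ U, α k)) * ∫ ω, ∏ k ∈ U, φ k ω ∂P := by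
        rw [integral_finset_sum _ (fun U _ => ((prod_integrable P φ hφm hφb U).const_mul _))]
        exact Finset.sum_congr rfl fun U _ => integral_const_mul _ _
    _ = ∏ k ∈ T, α k := by
        rw [Finset.sum_eq_single_of_mem ∅ (Finset.empty_mem_powerset T)]
        · simp [measure_univ]
        · intro U hU hUne
          rw [hmult U (Finset.nonempty_of_ne_empty hUne)
            (le_trans (Finset.card_le_card (Finset.mem_powerset.1 hU)) hT), mul_zero]

lemma rind_nonneg (A : Set ℝ) (x : ℝ) : 0 ≤ rind A x := by
  unfold rind; split <;> norm_num

lemma ofReal_half : ENNReal.ofReal (1 / 2) = 1 / 2 := by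
  rw [ENNReal.ofReal_div_of_pos (by norm_num)]
  norm_num

theorem stmt_1 {Ω : Type*} [MeasurableSpace Ω] (P : Measure Ω) [IsProbabilityMeasure P]
    (n l : ℕ) (hl : 1 ≤ l) (hln : l ≤ n)
    (Φ : ℝ → ℝ) (hΦ : ConvexOn ℝ Set.univ Φ) (hΦ0 : ∀ x, 0 ≤ Φ x)
    (φ : Fin n → Ω → ℝ) (hφm : ∀ k, Measurable (φ k))
    (hφb : ∀ k, ∀ᵐ ω ∂P, |φ k ω| ≤ 1)
    (hmult : ∀ S : Finset (Fin n), S.Nonempty → S.card ≤ l →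
      ∫ ω, ∏ j ∈ S, φ j ω ∂P = 0) :
    ∃ (Ω' : Type) (_ : MeasurableSpace Ω') (Q : Measure Ω') (_ : IsProbabilityMeasure Q)
      (r : Fin n → Ω' → ℝ),
      (∀ k, Measurable (r k)) ∧
      (∀ k, IsRademacher Q (r k)) ∧
      MlIndepFun Q l r ∧
      ∀ a : Fin n → ℝ,
        ∫ ω, Φ (∑ k, a k * φ k ω) ∂P ≤ ∫ ω, Φ (∑ k, a k * r k ω) ∂Q := by
  classical
  set Ω' := (Fin n → Bool) with hΩ'
  letI mΩ' : MeasurableSpace Ω' := ⊤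
  haveI : MeasurableSingletonClass Ω' := ⟨fun _ => trivial⟩
  set q : Ω' → ℝ := fun s => ∫ ω, wgt φ ω s ∂P with hqdef
  set Q : Measure Ω' := ∑ s : Ω', ENNReal.ofReal (q s) • Measure.dirac s with hQdef
  set rad : Fin n → Ω' → ℝ := fun k s => bsgn (s k) with hraddef
  have hb : ∀ᵐ ω ∂P, ∀ k, |φ k ω| ≤ 1 := (ae_all_iff).2 hφb
  have hwm : ∀ s : Ω', Measurable fun ω => wgt φ ω s := by
    intro s
    exact Finset.measurable_prod _ fun k _ =>
      ((measurable_const.add ((hφm k).const_mul _)).div_const 2)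
  have hwint : ∀ s : Ω', Integrable (fun ω => wgt φ ω s) P := by
    intro s
    refine (integrable_const (1:ℝ)).mono' (hwm s).aestronglyMeasurable ?_
    filter_upwards [hb] with ω hω
    rw [Real.norm_eq_abs, abs_of_nonneg (wgt_nonneg hω s)]
    exact wgt_le_one hω s
  have hqnn : ∀ s, 0 ≤ q s := fun s => integral_nonneg_of_ae (by
    filter_upwards [hb] with ω hω using wgt_nonneg hω s)
  have hQE : ∀ E : Set Ω', Q E = ∑ s ∈ Finset.univ.filter (· ∈ E), ENNReal.ofReal (q s) := by
    intro E
    rw [hQdef, Measure.finset_sum_apply, Finset.sum_filter]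
    refine Finset.sum_congr rfl fun s _ => ?_
    rw [Measure.smul_apply, Measure.dirac_apply, smul_eq_mul]
    by_cases hs : s ∈ E <;> simp [Set.indicator_apply, hs]
  have hQinter : ∀ (T : Finset (Fin n)) (A : Fin n → Set ℝ), T.card ≤ l →
      Q (⋂ k ∈ T, {s : Ω' | bsgn (s k) ∈ A k})
        = ENNReal.ofReal (∏ k ∈ T, ((rind (A k) 1 + rind (A k) (-1)) / 2)) := by
    intro T A hT
    rw [hQE]
    have hset : (Finset.univ.filter (· ∈ ⋂ k ∈ T, {s : Ω' | bsgn (s k) ∈ A k}))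
        = Finset.univ.filter (fun s : Ω' => ∀ k ∈ T, bsgn (s k) ∈ A k) := by
      refine Finset.filter_congr fun s _ => ?_
      simp [Set.mem_iInter]
    rw [hset, ← ENNReal.ofReal_sum_of_nonneg (fun s _ => hqnn s)]
    congr 1
    have hsum : ∑ s ∈ Finset.univ.filter (fun s : Ω' => ∀ k ∈ T, bsgn (s k) ∈ A k), q s
        = ∫ ω, ∑ s ∈ Finset.univ.filter
            (fun s : Ω' => ∀ k ∈ T, bsgn (s k) ∈ A k), wgt φ ω s ∂P :=
      (integral_finset_sum _ fun s _ => hwint s).symm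
    rw [hsum, ← key_integral P φ hφm hφb hmult T hT
      (fun k => (rind (A k) 1 + rind (A k) (-1)) / 2)
      (fun k => (rind (A k) 1 - rind (A k) (-1)) / 2)]
    exact integral_congr_ae (Filter.Eventually.of_forall fun ω => wgt_sum_filter φ ω T A)
  have hQuniv : Q Set.univ = 1 := by
    have h := hQinter ∅ (fun _ => Set.univ) (by simp)
    simpa using h
  haveI hQprob : IsProbabilityMeasure Q := ⟨hQuniv⟩
  have hQpre : ∀ (k : Fin n) (B : Set ℝ),
      Q ((fun s : Ω' => bsgn (s k)) ⁻¹' B)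
        = ENNReal.ofReal ((rind B 1 + rind B (-1)) / 2) := by
    intro k B
    have h := hQinter {k} (fun _ => B) (by simpa using hl)
    have hs : ((fun s : Ω' => bsgn (s k)) ⁻¹' B)
        = ⋂ k' ∈ ({k} : Finset (Fin n)), {s : Ω' | bsgn (s k') ∈ B} := by
      ext s; simp
    rw [hs, h]
    simp
  have hradm : ∀ k, Measurable (rad k) := fun k => measurable_from_top
  have hRad : ∀ k, IsRademacher Q (rad k) := by
    intro k
    refine ⟨fun s => by cases h : s k <;> simp [hraddef, bsgn, h], ?_, ?_⟩
    · have h1 : {ω : Ω' | rad k ω = 1} = (fun s : Ω' => bsgn (s k)) ⁻¹' {1} := by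
        ext s; simp [hraddef]
      rw [h1, hQpre]
      have : ((rind ({1} : Set ℝ) 1 + rind ({1} : Set ℝ) (-1)) / 2) = 1 / 2 := by
        unfold rind; norm_num
      rw [this, ofReal_half]
    · have h1 : {ω : Ω' | rad k ω = -1} = (fun s : Ω' => bsgn (s k)) ⁻¹' {-1} := by
        ext s; simp [hraddef]
      rw [h1, hQpre]
      have : ((rind ({-1} : Set ℝ) 1 + rind ({-1} : Set ℝ) (-1)) / 2) = 1 / 2 := by
        unfold rind; norm_num
      rw [this, ofReal_half]
  have hIndep : MlIndepFun Q l rad := by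
    intro S hSne hScard
    rw [iIndepFun_iff_measure_inter_preimage_eq_mul]
    intro t sets hsets
    set A : Fin n → Set ℝ := fun k => if h : k ∈ S then sets ⟨k, h⟩ else Set.univ with hA
    have hAj : ∀ j : {x // x ∈ S}, A ↑j = sets j := by
      intro j
      rw [hA]
      simp only [j.2, dif_pos]
    set T : Finset (Fin n) := t.image Subtype.val with hT
    have hTcard : T.card ≤ l := by
      rw [hT, Finset.card_image_of_injective _ Subtype.val_injective]
      exact le_trans (le_trans (Finset.card_le_univ t) (le_of_eq (Fintype.card_coe S))) hScard
    have hset : (⋂ j ∈ t, (fun j' : {x // x ∈ S} => rad ↑j') j ⁻¹' sets j)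
        = ⋂ k ∈ T, {s : Ω' | bsgn (s k) ∈ A k} := by
      ext s
      simp only [Set.mem_iInter, Set.mem_preimage, hT, Finset.mem_image, Set.mem_setOf_eq,
        hraddef]
      constructor
      · rintro h k ⟨j, hj, rfl⟩
        rw [hAj j]
        exact h j hj
      · intro h j hj
        have := h ↑j ⟨j, hj, rfl⟩
        rwa [hAj j] at this
    calc Q (⋂ j ∈ t, (fun j' : {x // x ∈ S} => rad ↑j') j ⁻¹' sets j)
        = ENNReal.ofReal (∏ k ∈ T, ((rind (A k) 1 + rind (A k) (-1)) / 2)) := by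
          rw [hset, hQinter T A hTcard]
      _ = ∏ k ∈ T, ENNReal.ofReal ((rind (A k) 1 + rind (A k) (-1)) / 2) :=
          ENNReal.ofReal_prod_of_nonneg fun k _ => by
            have := rind_nonneg (A k) 1; have := rind_nonneg (A k) (-1); linarith
      _ = ∏ j ∈ t, ENNReal.ofReal ((rind (A ↑j) 1 + rind (A ↑j) (-1)) / 2) := by
          rw [hT]
          exact Finset.prod_image fun j _ j' _ h => Subtype.val_injective h
      _ = ∏ j ∈ t, Q ((fun j' : {x // x ∈ S} => rad ↑j') j ⁻¹' sets j) := by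
          refine Finset.prod_congr rfl fun j _ => ?_
          rw [show (fun j' : {x // x ∈ S} => rad ↑j') j ⁻¹' sets j
              = (fun s : Ω' => bsgn (s ↑j)) ⁻¹' (A ↑j) by rw [hAj j]]
          rw [hQpre]
  refine ⟨Ω', mΩ', Q, hQprob, rad, hradm, hRad, hIndep, ?_⟩
  intro a
  set c : Ω' → ℝ := fun s => ∑ k, a k * bsgn (s k) with hc
  have hcont : Continuous Φ := continuousOn_univ.1 (hΦ.continuousOn isOpen_univ)
  set M : ℝ := ∑ k, |a k| with hM
  obtain ⟨C, hC⟩ := (isCompact_Icc : IsCompact (Set.Icc (-M) M)).exists_bound_of_continuousOn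
    hcont.continuousOn
  have hFm : Measurable fun ω => Φ (∑ k, a k * φ k ω) :=
    hcont.measurable.comp (Finset.measurable_sum _ fun k _ => (hφm k).const_mul _)
  have hargmem : ∀ᵐ ω ∂P, (∑ k, a k * φ k ω) ∈ Set.Icc (-M) M := by
    filter_upwards [hb] with ω hω
    have habs : |∑ k, a k * φ k ω| ≤ M := by
      calc |∑ k, a k * φ k ω| ≤ ∑ k, |a k * φ k ω| := Finset.abs_sum_le_sum_abs _ _
        _ ≤ ∑ k, |a k| := Finset.sum_le_sum fun k _ => by
            rw [abs_mul]
            calc |a k| * |φ k ω| ≤ |a k| * 1 := by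
                  exact mul_le_mul_of_nonneg_left (hω k) (abs_nonneg _)
              _ = |a k| := mul_one _
    exact ⟨neg_le_of_abs_le habs, le_of_abs_le habs⟩
  have hFint : Integrable (fun ω => Φ (∑ k, a k * φ k ω)) P :=
    (integrable_const C).mono' hFm.aestronglyMeasurable
      (by filter_upwards [hargmem] with ω h using hC _ h)
  have hGint : Integrable (fun ω => ∑ s : Ω', wgt φ ω s * Φ (c s)) P :=
    integrable_finset_sum _ fun s _ => (hwint s).mul_const _
  have hle : ∀ᵐ ω ∂P, Φ (∑ k, a k * φ k ω) ≤ ∑ s : Ω', wgt φ ω s * Φ (c s) := by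
    filter_upwards [hb] with ω hω
    have hrepr : ∑ k, a k * φ k ω = ∑ s : Ω', wgt φ ω s • c s := by
      rw [hc]
      simp only [smul_eq_mul, Finset.mul_sum]
      rw [Finset.sum_comm]
      refine Finset.sum_congr rfl fun k _ => ?_
      calc a k * φ k ω = a k * ∑ x : Ω', wgt φ ω x * bsgn (x k) := by
            rw [wgt_sum_sgn φ ω k]
        _ = ∑ x : Ω', wgt φ ω x * (a k * bsgn (x k)) := by
            rw [Finset.mul_sum]
            exact Finset.sum_congr rfl fun x _ => by ring
    rw [hrepr]
    have hj := hΦ.map_sum_le (t := Finset.univ) (w := fun s : Ω' => wgt φ ω s)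
      (p := c) (fun s _ => wgt_nonneg hω s) (wgt_sum_eq_one φ ω)
      (fun s _ => Set.mem_univ _)
    simpa [smul_eq_mul] using hj
  have hQint : ∫ s, Φ (c s) ∂Q = ∑ s : Ω', q s * Φ (c s) := by
    rw [integral_fintype (Integrable.of_finite)]
    refine Finset.sum_congr rfl fun s _ => ?_
    have hQs : Q {s} = ENNReal.ofReal (q s) := by
      rw [hQE]
      simp [Finset.sum_filter]
      exact (Finset.sum_eq_single s (fun b _ hb => by simp [hb]) (by simp)).trans (by simp)
    rw [measureReal_def, hQs, ENNReal.toReal_ofReal (hqnn s), smul_eq_mul]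
  calc ∫ ω, Φ (∑ k, a k * φ k ω) ∂P
      ≤ ∫ ω, ∑ s : Ω', wgt φ ω s * Φ (c s) ∂P := integral_mono_ae hFint hGint hle
    _ = ∑ s : Ω', q s * Φ (c s) := by
        rw [integral_finset_sum _ fun s _ => (hwint s).mul_const _]
        exact Finset.sum_congr rfl fun s _ => integral_mul_const _ _
    _ = ∫ s, Φ (c s) ∂Q := hQint.symm
    _ = ∫ ω, Φ (∑ k, a k * rad k ω) ∂Q := rfl
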